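/- Let G be a one-sided POSG and let V, W : Δ(S) → ℝ be convex continuous functions. Then sup_{b ∈ Δ(S)} |[HV](b) − [HW](b)| ≤ γ · sup_{b ∈ Δ(S)} |V(b) − W(b)|, where H is the minimax operator; that is, H is a contraction with factor γ in the supremum norm on the space of convex continuous functions on Δ(S). -/

import Mathlib

open scoped BigOperators
set_option linter.unusedSectionVars false

noncomputable section

/-- ℓ1 distance on `S → ℝ`. -/
def l1dist {S : Type*} [Fintype S] (p q : S → ℝ) : ℝ := ∑ s, |p s - q s|

/-- Evaluation at a belief `b` of the linear function on the simplex with vertex values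
`α : S → ℝ`. -/
def lineval {S : Type*} [Fintype S] (α : S → ℝ) (b : S → ℝ) : ℝ := ∑ s, b s * α s

/-- `f` is `k`-Lipschitz with respect to the ℓ1 metric on the probability simplex. -/
def LipOnSimplex {S : Type*} [Fintype S] (k : ℝ) (f : (S → ℝ) → ℝ) : Prop :=
  ∀ p ∈ stdSimplex ℝ S, ∀ q ∈ stdSimplex ℝ S, |f p - f q| ≤ k * l1dist p q

/-- A one-sided partially observable stochastic game. -/
structure OSPOSG (S A1 A2 O : Type*) [Fintype S] [Fintype A1] [Fintype A2] [Fintype O] where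
  /-- transition function: `T s a1 a2 o s'` is the probability of observing `o` and moving
  to `s'` from `s` under actions `a1, a2`. -/
  T : S → A1 → A2 → O → S → ℝ
  T_nonneg : ∀ s a1 a2 o s', 0 ≤ T s a1 a2 o s'
  T_sum : ∀ s a1 a2, ∑ o, ∑ s', T s a1 a2 o s' = 1
  /-- reward function of player 1 -/
  R : S → A1 → A2 → ℝ
  /-- discount factor -/
  γ : ℝ
  γ_pos : 0 < γ
  γ_lt_one : γ < 1

namespace OSPOSG

variable {S A1 A2 O : Type*} [Fintype S] [Fintype A1] [Fintype A2] [Fintype O]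
  [Nonempty S] [Nonempty A1] [Nonempty A2] [Nonempty O]

/-- The minimum reward `r_min`. -/
def rmin (G : OSPOSG S A1 A2 O) : ℝ :=
  Finset.univ.inf' Finset.univ_nonempty fun x : S × A1 × A2 => G.R x.1 x.2.1 x.2.2

/-- The maximum reward `r_max`. -/
def rmax (G : OSPOSG S A1 A2 O) : ℝ :=
  Finset.univ.sup' Finset.univ_nonempty fun x : S × A1 × A2 => G.R x.1 x.2.1 x.2.2

/-- `L = r_min / (1 - γ)`. -/
def Lval (G : OSPOSG S A1 A2 O) : ℝ := G.rmin / (1 - G.γ)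

/-- `U = r_max / (1 - γ)`. -/
def Uval (G : OSPOSG S A1 A2 O) : ℝ := G.rmax / (1 - G.γ)

/-- `δ = (U - L) / 2`. -/
def δval (G : OSPOSG S A1 A2 O) : ℝ := (G.Uval - G.Lval) / 2

/-- The set of stage strategies of player 2. -/
def Pi2 (S A2 : Type*) [Fintype A2] : Set (S → A2 → ℝ) :=
  {π2 | ∀ s, π2 s ∈ stdSimplex ℝ A2}

/-- Vertex values of the value composition `valcomp(π1, ᾱ)`. -/
def valcompVert (G : OSPOSG S A1 A2 O) (π1 : A1 → ℝ) (αb : A1 → O → S → ℝ) (s : S) : ℝ :=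
  Finset.univ.inf' Finset.univ_nonempty fun a2 =>
    ∑ a1, π1 a1 * (G.R s a1 a2 + G.γ * ∑ o, ∑ s', G.T s a1 a2 o s' * αb a1 o s')

/-- The value composition `valcomp(π1, ᾱ)`, a linear function of the belief `b`. -/
def valcomp (G : OSPOSG S A1 A2 O) (π1 : A1 → ℝ) (αb : A1 → O → S → ℝ) (b : S → ℝ) : ℝ :=
  ∑ s, b s * G.valcompVert π1 αb s

/-- `Pr_{b,π1,π2}[a1, o]`: the probability that player 1 plays `a1` and observes `o`. -/
def Pr (G : OSPOSG S A1 A2 O) (b : S → ℝ) (π1 : A1 → ℝ) (π2 : S → A2 → ℝ)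
    (a1 : A1) (o : O) : ℝ :=
  ∑ s, ∑ a2, ∑ s', b s * π1 a1 * π2 s a2 * G.T s a1 a2 o s'

/-- The updated belief `τ(b, a1, π2, o)` of player 1 (junk value `0` if the normalizing
constant vanishes; such terms are always multiplied by a zero probability below). -/
def beliefUpd (G : OSPOSG S A1 A2 O) (b : S → ℝ) (a1 : A1) (π2 : S → A2 → ℝ) (o : O) :
    S → ℝ := fun s' =>
  (∑ s, ∑ a2, b s * π2 s a2 * G.T s a1 a2 o s') /
    (∑ s'', ∑ s, ∑ a2, b s * π2 s a2 * G.T s a1 a2 o s'')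

/-- The stage utility `u^{V,b}(π1, π2)`. -/
def stageU (G : OSPOSG S A1 A2 O) (V : (S → ℝ) → ℝ) (b : S → ℝ)
    (π1 : A1 → ℝ) (π2 : S → A2 → ℝ) : ℝ :=
  (∑ s, ∑ a1, ∑ a2, b s * π1 a1 * π2 s a2 * G.R s a1 a2) +
    G.γ * ∑ a1, ∑ o, G.Pr b π1 π2 a1 o * V (G.beliefUpd b a1 π2 o)

/-- The minimax (Bellman) operator `[HV](b) = sup_{π1} inf_{π2} u^{V,b}(π1,π2)`. -/
def Hop (G : OSPOSG S A1 A2 O) (V : (S → ℝ) → ℝ) (b : S → ℝ) : ℝ :=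
  ⨆ π1 : stdSimplex ℝ A1, ⨅ π2 : Pi2 S A2, G.stageU V b π1.1 π2.1

end OSPOSG

namespace OSPOSG

variable {S A1 A2 O : Type*} [Fintype S] [Fintype A1] [Fintype A2] [Fintype O]
  [Nonempty S] [Nonempty A1] [Nonempty A2] [Nonempty O]

section Aux

variable {S A1 A2 O : Type*} [Fintype S] [Fintype A1] [Fintype A2] [Fintype O]
  [Nonempty S] [Nonempty A1] [Nonempty A2] [Nonempty O]

lemma aux_simplex_nonempty (α : Type*) [Fintype α] [Nonempty α] :
    Nonempty (stdSimplex ℝ α) := by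
  classical
  obtain ⟨a0⟩ := ‹Nonempty α›
  refine ⟨⟨fun a => if a = a0 then 1 else 0, fun a => ?_, ?_⟩⟩
  · dsimp only; split <;> norm_num
  · simp

lemma aux_Pi2_nonempty : Nonempty (Pi2 S A2) := by
  obtain ⟨⟨p, hp⟩⟩ := aux_simplex_nonempty A2
  exact ⟨⟨fun _ => p, fun _ => hp⟩⟩

lemma aux_Pr_nonneg (G : OSPOSG S A1 A2 O) {b : S → ℝ} {π1 : A1 → ℝ} {π2 : S → A2 → ℝ}
    (hb : b ∈ stdSimplex ℝ S) (h1 : π1 ∈ stdSimplex ℝ A1) (h2 : π2 ∈ Pi2 S A2)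
    (a1 : A1) (o : O) : 0 ≤ G.Pr b π1 π2 a1 o := by
  refine Finset.sum_nonneg fun s _ => Finset.sum_nonneg fun a2 _ =>
    Finset.sum_nonneg fun s' _ => ?_
  have := (h2 s).1 a2
  have := G.T_nonneg s a1 a2 o s'
  have := hb.1 s
  have := h1.1 a1
  positivity

lemma aux_sum_Pr (G : OSPOSG S A1 A2 O) {b : S → ℝ} {π1 : A1 → ℝ} {π2 : S → A2 → ℝ}
    (hb : b ∈ stdSimplex ℝ S) (h1 : π1 ∈ stdSimplex ℝ A1) (h2 : π2 ∈ Pi2 S A2) :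
    ∑ a1, ∑ o, G.Pr b π1 π2 a1 o = 1 := by
  have key : ∀ a1, (∑ o, G.Pr b π1 π2 a1 o) = π1 a1 := by
    intro a1
    unfold OSPOSG.Pr
    rw [Finset.sum_comm]
    have : ∀ s ∈ Finset.univ, (∑ o, ∑ a2, ∑ s', b s * π1 a1 * π2 s a2 * G.T s a1 a2 o s')
        = b s * π1 a1 := by
      intro s _
      rw [Finset.sum_comm]
      have : ∀ a2 ∈ Finset.univ,
          (∑ o, ∑ s', b s * π1 a1 * π2 s a2 * G.T s a1 a2 o s')
          = b s * π1 a1 * π2 s a2 := by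
        intro a2 _
        simp_rw [← Finset.mul_sum]
        rw [G.T_sum, mul_one]
      rw [Finset.sum_congr rfl this, ← Finset.mul_sum, (h2 s).2, mul_one]
    rw [Finset.sum_congr rfl this]
    have : ∀ s ∈ Finset.univ, b s * π1 a1 = π1 a1 * b s := fun s _ => mul_comm _ _
    rw [Finset.sum_congr rfl this, ← Finset.mul_sum, hb.2, mul_one]
  simp only [key]
  exact h1.2

lemma aux_Pr_eq (G : OSPOSG S A1 A2 O) (b : S → ℝ) (π1 : A1 → ℝ) (π2 : S → A2 → ℝ)
    (a1 : A1) (o : O) :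
    G.Pr b π1 π2 a1 o
      = π1 a1 * ∑ s'', ∑ s, ∑ a2, b s * π2 s a2 * G.T s a1 a2 o s'' := by
  unfold OSPOSG.Pr
  calc ∑ s, ∑ a2, ∑ s', b s * π1 a1 * π2 s a2 * G.T s a1 a2 o s'
      = ∑ s, ∑ s', ∑ a2, b s * π1 a1 * π2 s a2 * G.T s a1 a2 o s' :=
        Finset.sum_congr rfl fun s _ => Finset.sum_comm
    _ = ∑ s', ∑ s, ∑ a2, b s * π1 a1 * π2 s a2 * G.T s a1 a2 o s' :=
        Finset.sum_comm
    _ = π1 a1 * ∑ s'', ∑ s, ∑ a2, b s * π2 s a2 * G.T s a1 a2 o s'' := by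
        rw [Finset.mul_sum]
        refine Finset.sum_congr rfl fun s' _ => ?_
        rw [Finset.mul_sum]
        refine Finset.sum_congr rfl fun s _ => ?_
        rw [Finset.mul_sum]
        exact Finset.sum_congr rfl fun a2 _ => by ring

lemma aux_upd_mem (G : OSPOSG S A1 A2 O) {b : S → ℝ} {π2 : S → A2 → ℝ}
    (hb : b ∈ stdSimplex ℝ S) (h2 : π2 ∈ Pi2 S A2) (a1 : A1) (o : O)
    (hd : 0 < ∑ s'', ∑ s, ∑ a2, b s * π2 s a2 * G.T s a1 a2 o s'') :
    G.beliefUpd b a1 π2 o ∈ stdSimplex ℝ S := by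
  constructor
  · intro s'
    refine div_nonneg ?_ hd.le
    refine Finset.sum_nonneg fun s _ => Finset.sum_nonneg fun a2 _ => ?_
    have := (h2 s).1 a2
    have := G.T_nonneg s a1 a2 o s'
    have := hb.1 s
    positivity
  · unfold OSPOSG.beliefUpd
    rw [← Finset.sum_div, div_self hd.ne']

/-- Key estimate: if `|f p| ≤ M` on the simplex, then the expected value of `f` at the
updated beliefs is bounded by `M`. -/
lemma aux_exp_bound (G : OSPOSG S A1 A2 O) (f : (S → ℝ) → ℝ) {M : ℝ}
    (hM : ∀ p ∈ stdSimplex ℝ S, |f p| ≤ M)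
    {b : S → ℝ} {π1 : A1 → ℝ} {π2 : S → A2 → ℝ}
    (hb : b ∈ stdSimplex ℝ S) (h1 : π1 ∈ stdSimplex ℝ A1) (h2 : π2 ∈ Pi2 S A2) :
    |∑ a1, ∑ o, G.Pr b π1 π2 a1 o * f (G.beliefUpd b a1 π2 o)| ≤ M := by
  have term : ∀ a1 o, |G.Pr b π1 π2 a1 o * f (G.beliefUpd b a1 π2 o)|
      ≤ G.Pr b π1 π2 a1 o * M := by
    intro a1 o
    rcases eq_or_lt_of_le (aux_Pr_nonneg G hb h1 h2 a1 o) with h | h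
    · rw [← h, zero_mul, zero_mul, abs_zero]
    · have hd : 0 < ∑ s'', ∑ s, ∑ a2, b s * π2 s a2 * G.T s a1 a2 o s'' := by
        by_contra hcon
        push_neg at hcon
        have hnn : 0 ≤ ∑ s'', ∑ s, ∑ a2, b s * π2 s a2 * G.T s a1 a2 o s'' := by
          refine Finset.sum_nonneg fun s'' _ => Finset.sum_nonneg fun s _ =>
            Finset.sum_nonneg fun a2 _ => ?_
          have := (h2 s).1 a2
          have := G.T_nonneg s a1 a2 o s''
          have := hb.1 s
          positivity
        have : G.Pr b π1 π2 a1 o = 0 := by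
          rw [aux_Pr_eq, le_antisymm hcon hnn, mul_zero]
        exact absurd this (ne_of_gt h)
      rw [abs_mul, abs_of_pos h]
      exact mul_le_mul_of_nonneg_left (hM _ (aux_upd_mem G hb h2 a1 o hd)) h.le
  calc |∑ a1, ∑ o, G.Pr b π1 π2 a1 o * f (G.beliefUpd b a1 π2 o)|
      ≤ ∑ a1, ∑ o, |G.Pr b π1 π2 a1 o * f (G.beliefUpd b a1 π2 o)| := by
        refine (Finset.abs_sum_le_sum_abs _ _).trans ?_
        exact Finset.sum_le_sum fun a1 _ => Finset.abs_sum_le_sum_abs _ _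
    _ ≤ ∑ a1, ∑ o, G.Pr b π1 π2 a1 o * M :=
        Finset.sum_le_sum fun a1 _ => Finset.sum_le_sum fun o _ => term a1 o
    _ = (∑ a1, ∑ o, G.Pr b π1 π2 a1 o) * M := by
        rw [Finset.sum_mul]
        exact Finset.sum_congr rfl fun a1 _ => (Finset.sum_mul _ _ _).symm
    _ = M := by rw [aux_sum_Pr G hb h1 h2, one_mul]

lemma aux_stage_diff (G : OSPOSG S A1 A2 O) (V W : (S → ℝ) → ℝ) (b : S → ℝ)
    (π1 : A1 → ℝ) (π2 : S → A2 → ℝ) :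
    G.stageU V b π1 π2 - G.stageU W b π1 π2
      = G.γ * ∑ a1, ∑ o, G.Pr b π1 π2 a1 o *
          ((fun p => V p - W p) (G.beliefUpd b a1 π2 o)) := by
  unfold OSPOSG.stageU
  simp only [mul_sub, Finset.sum_sub_distrib]
  ring

lemma aux_sum_coeff {b : S → ℝ} {π1 : A1 → ℝ} {π2 : S → A2 → ℝ}
    (hb : b ∈ stdSimplex ℝ S) (h1 : π1 ∈ stdSimplex ℝ A1) (h2 : π2 ∈ Pi2 S A2) :
    ∑ s, ∑ a1, ∑ a2, b s * π1 a1 * π2 s a2 = 1 := by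
  have : ∀ s ∈ Finset.univ, (∑ a1, ∑ a2 : A2, b s * π1 a1 * π2 s a2) = b s := by
    intro s _
    have : ∀ a1 ∈ Finset.univ, (∑ a2 : A2, b s * π1 a1 * π2 s a2) = b s * π1 a1 := by
      intro a1 _
      rw [← Finset.mul_sum, (h2 s).2, mul_one]
    rw [Finset.sum_congr rfl this, ← Finset.mul_sum, h1.2, mul_one]
  rw [Finset.sum_congr rfl this, hb.2]

/-- Boundedness of the stage utility. -/
lemma aux_stage_bound (G : OSPOSG S A1 A2 O) (V : (S → ℝ) → ℝ) {CV : ℝ}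
    (hCV : ∀ p ∈ stdSimplex ℝ S, |V p| ≤ CV)
    {b : S → ℝ} {π1 : A1 → ℝ} {π2 : S → A2 → ℝ}
    (hb : b ∈ stdSimplex ℝ S) (h1 : π1 ∈ stdSimplex ℝ A1) (h2 : π2 ∈ Pi2 S A2) :
    |G.stageU V b π1 π2| ≤
      (Finset.univ.sup' Finset.univ_nonempty fun x : S × A1 × A2 => |G.R x.1 x.2.1 x.2.2|)
        + G.γ * CV := by
  set CR := Finset.univ.sup' Finset.univ_nonempty
    fun x : S × A1 × A2 => |G.R x.1 x.2.1 x.2.2| with hCR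
  have part1 : |∑ s, ∑ a1, ∑ a2, b s * π1 a1 * π2 s a2 * G.R s a1 a2| ≤ CR := by
    have term : ∀ s a1 a2, |b s * π1 a1 * π2 s a2 * G.R s a1 a2|
        ≤ b s * π1 a1 * π2 s a2 * CR := by
      intro s a1 a2
      have hc : 0 ≤ b s * π1 a1 * π2 s a2 := by
        have := (h2 s).1 a2; have := hb.1 s; have := h1.1 a1; positivity
      rw [abs_mul, abs_of_nonneg hc]
      refine mul_le_mul_of_nonneg_left ?_ hc
      exact Finset.le_sup' (f := fun x : S × A1 × A2 => |G.R x.1 x.2.1 x.2.2|)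
        (Finset.mem_univ (s, a1, a2))
    calc |∑ s, ∑ a1, ∑ a2, b s * π1 a1 * π2 s a2 * G.R s a1 a2|
        ≤ ∑ s, ∑ a1, ∑ a2, |b s * π1 a1 * π2 s a2 * G.R s a1 a2| := by
          refine (Finset.abs_sum_le_sum_abs _ _).trans ?_
          refine Finset.sum_le_sum fun s _ => ?_
          refine (Finset.abs_sum_le_sum_abs _ _).trans ?_
          exact Finset.sum_le_sum fun a1 _ => Finset.abs_sum_le_sum_abs _ _
      _ ≤ ∑ s, ∑ a1, ∑ a2, b s * π1 a1 * π2 s a2 * CR := by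
          exact Finset.sum_le_sum fun s _ => Finset.sum_le_sum fun a1 _ =>
            Finset.sum_le_sum fun a2 _ => term s a1 a2
      _ = (∑ s, ∑ a1, ∑ a2, b s * π1 a1 * π2 s a2) * CR := by
          rw [Finset.sum_mul]
          refine Finset.sum_congr rfl fun s _ => ?_
          rw [Finset.sum_mul]
          exact Finset.sum_congr rfl fun a1 _ => (Finset.sum_mul _ _ _).symm
      _ = CR := by rw [aux_sum_coeff hb h1 h2, one_mul]
  have part2 := aux_exp_bound G V hCV hb h1 h2
  unfold OSPOSG.stageU
  calc |(∑ s, ∑ a1, ∑ a2, b s * π1 a1 * π2 s a2 * G.R s a1 a2)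
        + G.γ * ∑ a1, ∑ o, G.Pr b π1 π2 a1 o * V (G.beliefUpd b a1 π2 o)|
      ≤ |∑ s, ∑ a1, ∑ a2, b s * π1 a1 * π2 s a2 * G.R s a1 a2|
        + |G.γ * ∑ a1, ∑ o, G.Pr b π1 π2 a1 o * V (G.beliefUpd b a1 π2 o)| :=
        abs_add_le _ _
    _ ≤ CR + G.γ * CV := by
        refine add_le_add part1 ?_
        rw [abs_mul, abs_of_pos G.γ_pos]
        exact mul_le_mul_of_nonneg_left part2 G.γ_pos.le

end Aux

/-- The Bellman operator `H` is a `γ`-contraction in the supremum norm on the space of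
convex continuous functions on the simplex. -/
theorem Hop_contraction (G : OSPOSG S A1 A2 O) (V W : (S → ℝ) → ℝ)
    (hVconv : ConvexOn ℝ (stdSimplex ℝ S) V) (hVcont : ContinuousOn V (stdSimplex ℝ S))
    (hWconv : ConvexOn ℝ (stdSimplex ℝ S) W) (hWcont : ContinuousOn W (stdSimplex ℝ S)) :
    (⨆ b : stdSimplex ℝ S, |G.Hop V b.1 - G.Hop W b.1|) ≤
      G.γ * ⨆ b : stdSimplex ℝ S, |V b.1 - W b.1| := by
  classical
  have hne1 : Nonempty (stdSimplex ℝ A1) := aux_simplex_nonempty A1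
  have hne2 : Nonempty (Pi2 S A2) := aux_Pi2_nonempty
  have hneS : Nonempty (stdSimplex ℝ S) := aux_simplex_nonempty S
  obtain ⟨CV, hCV'⟩ := (isCompact_stdSimplex ℝ S).exists_bound_of_continuousOn hVcont
  obtain ⟨CW, hCW'⟩ := (isCompact_stdSimplex ℝ S).exists_bound_of_continuousOn hWcont
  have hCV : ∀ p ∈ stdSimplex ℝ S, |V p| ≤ CV := by
    intro p hp; simpa [Real.norm_eq_abs] using hCV' p hp
  have hCW : ∀ p ∈ stdSimplex ℝ S, |W p| ≤ CW := by
    intro p hp; simpa [Real.norm_eq_abs] using hCW' p hp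
  set M : ℝ := ⨆ b : stdSimplex ℝ S, |V b.1 - W b.1| with hMdef
  have hMbdd : BddAbove (Set.range fun b : stdSimplex ℝ S => |V b.1 - W b.1|) := by
    refine ⟨CV + CW, ?_⟩
    rintro _ ⟨b, rfl⟩
    calc |V b.1 - W b.1| ≤ |V b.1| + |W b.1| := abs_sub _ _
      _ ≤ CV + CW := add_le_add (hCV _ b.2) (hCW _ b.2)
  have hM : ∀ p ∈ stdSimplex ℝ S, |V p - W p| ≤ M := fun p hp =>
    le_ciSup hMbdd (⟨p, hp⟩ : stdSimplex ℝ S)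
  -- the one-sided estimate
  have main : ∀ (V' W' : (S → ℝ) → ℝ) (CV' CW' : ℝ),
      (∀ p ∈ stdSimplex ℝ S, |V' p| ≤ CV') → (∀ p ∈ stdSimplex ℝ S, |W' p| ≤ CW') →
      (∀ p ∈ stdSimplex ℝ S, |V' p - W' p| ≤ M) →
      ∀ b : stdSimplex ℝ S, G.Hop V' b.1 ≤ G.Hop W' b.1 + G.γ * M := by
    intro V' W' CV' CW' hCV' hCW' hM' b
    set CR : ℝ := Finset.univ.sup' Finset.univ_nonempty
      fun x : S × A1 × A2 => |G.R x.1 x.2.1 x.2.2| with hCRdef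
    have hbbV : ∀ π1 : stdSimplex ℝ A1,
        BddBelow (Set.range fun π2 : Pi2 S A2 => G.stageU V' b.1 π1.1 π2.1) := by
      intro π1
      refine ⟨-(CR + G.γ * CV'), ?_⟩
      rintro _ ⟨π2, rfl⟩
      have := aux_stage_bound G V' hCV' b.2 π1.2 π2.2
      have := (abs_le.mp this).1
      linarith
    have hbbW : ∀ π1 : stdSimplex ℝ A1,
        BddBelow (Set.range fun π2 : Pi2 S A2 => G.stageU W' b.1 π1.1 π2.1) := by
      intro π1
      refine ⟨-(CR + G.γ * CW'), ?_⟩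
      rintro _ ⟨π2, rfl⟩
      have := aux_stage_bound G W' hCW' b.2 π1.2 π2.2
      have := (abs_le.mp this).1
      linarith
    have hbaW : BddAbove (Set.range fun π1 : stdSimplex ℝ A1 =>
        ⨅ π2 : Pi2 S A2, G.stageU W' b.1 π1.1 π2.1) := by
      refine ⟨CR + G.γ * CW', ?_⟩
      rintro _ ⟨π1, rfl⟩
      obtain ⟨π2⟩ := hne2
      refine (ciInf_le (hbbW π1) π2).trans ?_
      have := aux_stage_bound G W' hCW' b.2 π1.2 π2.2
      exact (abs_le.mp this).2
    have hstage : ∀ (π1 : stdSimplex ℝ A1) (π2 : Pi2 S A2),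
        |G.stageU V' b.1 π1.1 π2.1 - G.stageU W' b.1 π1.1 π2.1| ≤ G.γ * M := by
      intro π1 π2
      rw [aux_stage_diff, abs_mul, abs_of_pos G.γ_pos]
      exact mul_le_mul_of_nonneg_left
        (aux_exp_bound G (fun p => V' p - W' p) hM' b.2 π1.2 π2.2) G.γ_pos.le
    unfold Hop
    refine ciSup_le fun π1 => ?_
    have step1 : (⨅ π2 : Pi2 S A2, G.stageU V' b.1 π1.1 π2.1)
        ≤ (⨅ π2 : Pi2 S A2, G.stageU W' b.1 π1.1 π2.1) + G.γ * M := by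
      rw [← sub_le_iff_le_add]
      refine le_ciInf fun π2 => ?_
      rw [sub_le_iff_le_add]
      refine (ciInf_le (hbbV π1) π2).trans ?_
      have := (abs_le.mp (hstage π1 π2)).2
      linarith
    have step2 : (⨅ π2 : Pi2 S A2, G.stageU W' b.1 π1.1 π2.1)
        ≤ ⨆ π1 : stdSimplex ℝ A1, ⨅ π2 : Pi2 S A2, G.stageU W' b.1 π1.1 π2.1 :=
      le_ciSup hbaW π1
    linarith
  refine ciSup_le fun b => ?_
  rw [abs_sub_le_iff]
  constructor
  · have := main V W CV CW hCV hCW hM b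
    linarith
  · have hM2 : ∀ p ∈ stdSimplex ℝ S, |W p - V p| ≤ M := by
      intro p hp; rw [abs_sub_comm]; exact hM p hp
    have := main W V CW CV hCW hCV hM2 b
    linarith

end OSPOSG
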